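/- Let (G,γ) be a colored-Laman graph (n vertices, 2n+1 edges, satisfying m' ≤ 2n' − 3 + 2·rk_{Z²} − 2(c'−1) on all edge-induced subgraphs). Then a realization (p, L) of any colored direction network on (G,γ) is collapsed (every edge ij satisfies p_j + L·γ_{ij} = p_i) if and only if L is the zero matrix and all points p_i coincide. In particular, the space of collapsed realizations is exactly 2-dimensional. -/
import Mathlib


open Finset

section Defs
variable {V E : Type} [Fintype V] [DecidableEq V] [Fintype E] [DecidableEq E]

/-- Signed incidence of edge `e` at vertex `v`. -/
def incid (th hd : E → V) (e : E) (v : V) : ℤ :=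
  (if hd e = v then 1 else 0) - (if th e = v then 1 else 0)

/-- `x : E → ℤ` is a cycle (1-chain with zero boundary) supported on the edge set `S`. -/
def IsCycle (th hd : E → V) (S : Finset E) (x : E → ℤ) : Prop :=
  (∀ e ∉ S, x e = 0) ∧ ∀ v : V, ∑ e, x e * incid th hd e v = 0

/-- Signed color-sum of a chain. -/
def rho (γ : E → ℤ × ℤ) (x : E → ℤ) : ℤ × ℤ := ∑ e, x e • γ e

def q2 (p : ℤ × ℤ) : ℚ × ℚ := ((p.1 : ℚ), (p.2 : ℚ))

/-- The ℤ²-rank of the colored subgraph with edge set `S`. -/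
noncomputable def zrank (th hd : E → V) (γ : E → ℤ × ℤ) (S : Finset E) : ℕ :=
  Module.finrank ℚ (Submodule.span ℚ (q2 '' (rho γ '' {x | IsCycle th hd S x})))

/-- Adjacency via an edge in `S`. -/
def adjS (th hd : E → V) (S : Finset E) (u v : V) : Prop :=
  ∃ e ∈ S, (th e = u ∧ hd e = v) ∨ (th e = v ∧ hd e = u)

/-- Vertices spanned by the edge set `S`. -/
def verts (th hd : E → V) (S : Finset E) : Finset V := S.image th ∪ S.image hd

/-- Number of connected components of the subgraph induced by the edge set `S`
(on the vertices it spans). -/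
noncomputable def ncomp (th hd : E → V) (S : Finset E) : ℕ :=
  Nat.card (Quotient (Relation.EqvGen.setoid
    (fun a b : {v : V // v ∈ verts th hd S} => adjS th hd S a.1 b.1)))

/-- The subgraph with edge set `S` is connected and spans all vertices. -/
def Conn (th hd : E → V) (S : Finset E) : Prop :=
  ∀ u v : V, Relation.EqvGen (adjS th hd S) u v

/-- The function `f(G') = n' + rk_{ℤ²}(G') − c'`. -/
noncomputable def fZ (th hd : E → V) (γ : E → ℤ × ℤ) (S : Finset E) : ℤ :=
  ((verts th hd S).card : ℤ) + (zrank th hd γ S : ℤ) - (ncomp th hd S : ℤ)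

end Defs

/-- Edge set of the complete multigraph `K_n^{6,4}`. -/
def KE (n : ℕ) : Type :=
  ({p : Fin n × Fin n // p.1 < p.2} × Fin 6) ⊕ (Fin n × Fin 4)

instance (n : ℕ) : Fintype (KE n) := by unfold KE; infer_instance
instance (n : ℕ) : DecidableEq (KE n) := by unfold KE; infer_instance

def Kt (n : ℕ) : KE n → Fin n := Sum.elim (fun q => q.1.1.1) (fun q => q.1)
def Kh (n : ℕ) : KE n → Fin n := Sum.elim (fun q => q.1.1.2) (fun q => q.1)

/-- Multiplication of a 2×2 real matrix with a vector of ℤ², landing in ℝ². -/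
def Lmul (L : Matrix (Fin 2) (Fin 2) ℝ) (g : ℤ × ℤ) : ℝ × ℝ :=
  (L 0 0 * (g.1 : ℝ) + L 0 1 * (g.2 : ℝ), L 1 0 * (g.1 : ℝ) + L 1 1 * (g.2 : ℝ))

section Aux
variable {V E : Type} [Fintype V] [DecidableEq V] [Fintype E] [DecidableEq E]

lemma Lmul_add (L : Matrix (Fin 2) (Fin 2) ℝ) (g h : ℤ × ℤ) :
    Lmul L (g + h) = Lmul L g + Lmul L h := by
  simp only [Lmul, Prod.mk_add_mk, Prod.fst_add, Prod.snd_add, Prod.mk.injEq]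
  constructor <;> push_cast <;> ring

lemma Lmul_zero_left (g : ℤ × ℤ) : Lmul 0 g = 0 := by
  simp [Lmul, Prod.ext_iff]

/-- `Lmul L` as an additive hom. -/
def LmulHom (L : Matrix (Fin 2) (Fin 2) ℝ) : (ℤ × ℤ) →+ ℝ × ℝ :=
  AddMonoidHom.mk' (Lmul L) (Lmul_add L)

/-- `Lmul L` transported to a ℚ-linear map on ℚ². -/
def Fmap (L : Matrix (Fin 2) (Fin 2) ℝ) : (ℚ × ℚ) →ₗ[ℚ] ℝ × ℝ where
  toFun y := (L 0 0 * (y.1 : ℝ) + L 0 1 * (y.2 : ℝ), L 1 0 * (y.1 : ℝ) + L 1 1 * (y.2 : ℝ))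
  map_add' a b := by
    simp only [Prod.fst_add, Prod.snd_add, Prod.mk_add_mk, Prod.mk.injEq]
    constructor <;> push_cast <;> ring
  map_smul' c a := by
    simp only [Prod.smul_fst, Prod.smul_snd, smul_eq_mul, RingHom.id_apply,
      Prod.smul_mk, Rat.smul_def, Prod.mk.injEq]
    constructor <;> push_cast <;> ring

lemma Fmap_q2 (L : Matrix (Fin 2) (Fin 2) ℝ) (r : ℤ × ℤ) : Fmap L (q2 r) = Lmul L r := by
  simp only [Fmap, q2, LinearMap.coe_mk, AddHom.coe_mk, Lmul, Prod.mk.injEq]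
  constructor <;> push_cast <;> ring

omit [Fintype E] [DecidableEq E] in
lemma sum_incid_smul (th hd : E → V) (e : E) (p : V → ℝ × ℝ) :
    ∑ v, incid th hd e v • p v = p (hd e) - p (th e) := by
  simp only [incid, sub_smul, Finset.sum_sub_distrib, ite_smul, one_smul, zero_smul]
  rw [Finset.sum_ite_eq, Finset.sum_ite_eq]
  simp

omit [DecidableEq E] in
/-- Summing collapse relations around a cycle kills `L · ρ(C)`. -/
lemma cycle_collapse (th hd : E → V) (γ : E → ℤ × ℤ) (p : V → ℝ × ℝ)
    (L : Matrix (Fin 2) (Fin 2) ℝ)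
    (hc : ∀ e : E, p (hd e) + Lmul L (γ e) = p (th e))
    (x : E → ℤ) (hx : IsCycle th hd Finset.univ x) :
    Lmul L (rho γ x) = 0 := by
  have h1 : Lmul L (rho γ x) = ∑ e, x e • Lmul L (γ e) := by
    show LmulHom L (rho γ x) = _
    rw [rho, map_sum]
    exact Finset.sum_congr rfl fun e _ => map_zsmul (LmulHom L) (x e) (γ e)
  have h2 : ∀ e, Lmul L (γ e) = p (th e) - p (hd e) := by
    intro e; rw [← hc e]; abel
  rw [h1]
  calc ∑ e, x e • Lmul L (γ e)
      = ∑ e, x e • (p (th e) - p (hd e)) :=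
        Finset.sum_congr rfl fun e _ => by rw [h2]
    _ = -∑ e, ∑ v, (x e * incid th hd e v) • p v := by
        rw [← Finset.sum_neg_distrib]
        refine Finset.sum_congr rfl fun e _ => ?_
        rw [show ∑ v, (x e * incid th hd e v) • p v = x e • ∑ v, incid th hd e v • p v by
          rw [Finset.smul_sum]
          exact Finset.sum_congr rfl fun v _ => mul_smul (x e) (incid th hd e v) (p v)]
        rw [sum_incid_smul, ← smul_neg, neg_sub]
    _ = -∑ v, (∑ e, x e * incid th hd e v) • p v := by
        rw [Finset.sum_comm]
        congr 1
        exact Finset.sum_congr rfl fun v _ => (Finset.sum_smul).symm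
    _ = 0 := by simp only [hx.2, zero_smul, Finset.sum_const_zero, neg_zero]

end Aux

/-- For a colored-Laman graph, a realization `(p, L)` of any direction network is collapsed
(every edge satisfies `p_j + L·γ_{ij} = p_i`) iff `L = 0` and all points coincide; in
particular the space of collapsed realizations is exactly 2-dimensional. -/
theorem statement18 {V E : Type} [Fintype V] [DecidableEq V] [Fintype E] [DecidableEq E]
    (th hd : E → V) (γ : E → ℤ × ℤ)
    (hm : (Fintype.card E : ℤ) = 2 * Fintype.card V + 1)
    (hlam : ∀ S : Finset E, S.Nonempty →
      (S.card : ℤ) ≤ 2 * ((verts th hd S).card : ℤ) - 3 + 2 * (zrank th hd γ S : ℤ)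
        - 2 * ((ncomp th hd S : ℤ) - 1)) :
    (∀ (p : V → ℝ × ℝ) (L : Matrix (Fin 2) (Fin 2) ℝ),
      (∀ e : E, p (hd e) + Lmul L (γ e) = p (th e)) ↔
        (L = 0 ∧ ∀ i j : V, p i = p j)) ∧
    (∃ W : Submodule ℝ ((V → ℝ × ℝ) × Matrix (Fin 2) (Fin 2) ℝ),
      (∀ pL : (V → ℝ × ℝ) × Matrix (Fin 2) (Fin 2) ℝ,
        pL ∈ W ↔ ∀ e : E, pL.1 (hd e) + Lmul pL.2 (γ e) = pL.1 (th e)) ∧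
      Module.finrank ℝ W = 2) := by
  -- E is nonempty
  have hEne : Nonempty E := by rw [← Fintype.card_pos_iff]; omega
  obtain ⟨e₀⟩ := hEne
  -- numeric bookkeeping for S = univ
  have hzle : zrank th hd γ (Finset.univ : Finset E) ≤ 2 := by
    have := Submodule.finrank_le
      (Submodule.span ℚ (q2 '' (rho γ '' {x | IsCycle th hd (Finset.univ : Finset E) x})))
    simpa [zrank] using this
  have hth0 : th e₀ ∈ verts th hd (Finset.univ : Finset E) :=
    Finset.mem_union_left _ (Finset.mem_image_of_mem th (Finset.mem_univ e₀))
  have hcge : 1 ≤ ncomp th hd (Finset.univ : Finset E) := by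
    have : Nonempty (Quotient (Relation.EqvGen.setoid
        (fun a b : {v : V // v ∈ verts th hd (Finset.univ : Finset E)} =>
          adjS th hd Finset.univ a.1 b.1))) := ⟨⟦⟨th e₀, hth0⟩⟧⟩
    exact Nat.one_le_iff_ne_zero.mpr (Nat.card_ne_zero.mpr ⟨this, inferInstance⟩)
  have hvle : (verts th hd (Finset.univ : Finset E)).card ≤ Fintype.card V :=
    Finset.card_le_univ _
  have hineq := hlam Finset.univ ⟨e₀, Finset.mem_univ e₀⟩
  rw [Finset.card_univ] at hineq
  have hvcard : (verts th hd (Finset.univ : Finset E)).card = Fintype.card V := by omega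
  have hz2 : zrank th hd γ (Finset.univ : Finset E) = 2 := by omega
  have hc1 : ncomp th hd (Finset.univ : Finset E) = 1 := by omega
  have hverts : verts th hd (Finset.univ : Finset E) = Finset.univ :=
    Finset.eq_univ_of_card _ hvcard
  -- the ρ-span is all of ℚ²
  have hspan : Submodule.span ℚ
      (q2 '' (rho γ '' {x | IsCycle th hd (Finset.univ : Finset E) x})) = ⊤ := by
    apply Submodule.eq_top_of_finrank_eq
    rw [show Module.finrank ℚ (ℚ × ℚ) = 2 by simp]
    exact hz2
  -- connectivity
  have hlift : ∀ (a b : {w : V // w ∈ verts th hd (Finset.univ : Finset E)}),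
      Relation.EqvGen (fun a b : {w : V // w ∈ verts th hd (Finset.univ : Finset E)} =>
        adjS th hd Finset.univ a.1 b.1) a b →
      Relation.EqvGen (adjS th hd (Finset.univ : Finset E)) a.1 b.1 := by
    intro a b h
    induction h with
    | rel x y h => exact Relation.EqvGen.rel _ _ h
    | refl x => exact Relation.EqvGen.refl _
    | symm x y _ ih => exact Relation.EqvGen.symm _ _ ih
    | trans x y z _ _ ih1 ih2 => exact Relation.EqvGen.trans _ _ _ ih1 ih2
  have hconn : ∀ u v : V, Relation.EqvGen (adjS th hd (Finset.univ : Finset E)) u v := by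
    intro u v
    have hsub := (Nat.card_eq_one_iff_unique.mp hc1).1
    have hu : u ∈ verts th hd (Finset.univ : Finset E) := hverts ▸ Finset.mem_univ u
    have hv : v ∈ verts th hd (Finset.univ : Finset E) := hverts ▸ Finset.mem_univ v
    exact hlift ⟨u, hu⟩ ⟨v, hv⟩ (Quotient.exact (hsub.allEq ⟦⟨u, hu⟩⟧ ⟦⟨v, hv⟩⟧))
  -- part 1
  have part1 : ∀ (p : V → ℝ × ℝ) (L : Matrix (Fin 2) (Fin 2) ℝ),
      (∀ e : E, p (hd e) + Lmul L (γ e) = p (th e)) ↔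
        (L = 0 ∧ ∀ i j : V, p i = p j) := by
    intro p L
    constructor
    · intro hc
      have hF : ∀ y : ℚ × ℚ, Fmap L y = 0 := by
        intro y
        have hy : y ∈ Submodule.span ℚ
            (q2 '' (rho γ '' {x | IsCycle th hd (Finset.univ : Finset E) x})) :=
          hspan ▸ Submodule.mem_top
        refine LinearMap.mem_ker.mp (Submodule.span_le.mpr ?_ hy)
        rintro z ⟨r, ⟨x, hx, rfl⟩, rfl⟩
        rw [SetLike.mem_coe, LinearMap.mem_ker, Fmap_q2]
        exact cycle_collapse th hd γ p L hc x hx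
      have hL : L = 0 := by
        have h10 := hF (1, 0)
        have h01 := hF (0, 1)
        simp only [Fmap, LinearMap.coe_mk, AddHom.coe_mk, Rat.cast_one, Rat.cast_zero,
          mul_one, mul_zero, add_zero, zero_add, Prod.mk_eq_zero] at h10 h01
        ext i j
        fin_cases i <;> fin_cases j <;>
          simp [h10.1, h10.2, h01.1, h01.2]
      refine ⟨hL, fun i j => ?_⟩
      have hstep : ∀ a b : V, adjS th hd (Finset.univ : Finset E) a b → p a = p b := by
        rintro a b ⟨e, -, h | h⟩ <;>
        · have he := hc e
          rw [hL, Lmul_zero_left, add_zero] at he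
          rw [← h.1, ← h.2]
          first | exact he.symm | exact he
      have hij := hconn i j
      induction hij with
      | rel a b h => exact hstep a b h
      | refl a => rfl
      | symm a b _ ih => exact ih.symm
      | trans a b c _ _ ih1 ih2 => exact ih1.trans ih2
    · rintro ⟨hL, hp⟩ e
      rw [hL, Lmul_zero_left, add_zero]
      exact hp _ _
  refine ⟨part1, ?_⟩
  -- part 2 : the collapsed space
  set emb : (ℝ × ℝ) →ₗ[ℝ] (V → ℝ × ℝ) × Matrix (Fin 2) (Fin 2) ℝ :=
    { toFun := fun c => (fun _ => c, 0)
      map_add' := by intro a b; ext <;> simp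
      map_smul' := by intro c a; ext <;> simp } with hemb
  refine ⟨LinearMap.range emb, fun pL => ?_, ?_⟩
  · constructor
    · rintro ⟨c, rfl⟩ e
      simp [hemb, Lmul_zero_left]
    · intro hc
      obtain ⟨hL, hp⟩ := (part1 pL.1 pL.2).mp hc
      refine ⟨pL.1 (th e₀), ?_⟩
      have h1 : (fun _ : V => pL.1 (th e₀)) = pL.1 := funext fun v => hp (th e₀) v
      have : emb (pL.1 (th e₀)) = ((fun _ : V => pL.1 (th e₀)), (0 : Matrix (Fin 2) (Fin 2) ℝ)) := rfl
      rw [this, h1, ← hL]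
  · have hinj : Function.Injective emb := by
      intro a b hab
      have := congrArg (fun q => q.1 (th e₀)) hab
      simpa [hemb] using this
    rw [LinearMap.finrank_range_of_inj hinj]
    simp
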